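/- There exists a Lie algebra L over the field with three elements 𝔽₃ that satisfies the 4-Engel identity [x,y,y,y,y] = 0 for all x, y ∈ L and is not nilpotent. -/

import Mathlib

namespace EngelExample

noncomputable section

abbrev F := ZMod 3
abbrev A := Finset ℕ →₀ F
abbrev L := (ℕ →₀ F) × A

/-- The "partial derivative" in direction `i` on the algebra with basis
the square-free monomials indexed by finite sets of variables. -/
def δ (i : ℕ) : Module.End F A :=
  Finsupp.lsum F fun S => if i ∈ S then Finsupp.lsingle (S.erase i) else 0

lemma δ_single (i : ℕ) (S : Finset ℕ) (c : F) :
    δ i (Finsupp.single S c) = if i ∈ S then Finsupp.single (S.erase i) c else 0 := by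
  simp only [δ, Finsupp.lsum_single]
  split <;> simp

lemma δ_δ (i j : ℕ) (a : A) : δ i (δ j a) = δ j (δ i a) := by
  induction a using Finsupp.induction_linear with
  | zero => simp
  | add f g hf hg => simp [hf, hg]
  | single S c =>
    rcases eq_or_ne i j with rfl | hij
    · rfl
    · by_cases hi : i ∈ S <;> by_cases hj : j ∈ S <;>
        simp [δ_single, hi, hj, Finset.mem_erase, hij, hij.symm,
          Finset.erase_right_comm]

lemma δ_sq (i : ℕ) (a : A) : δ i (δ i a) = 0 := by
  induction a using Finsupp.induction_linear with
  | zero => simp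
  | add f g hf hg => simp [hf, hg]
  | single S c => by_cases hi : i ∈ S <;> simp [δ_single, hi]

lemma commute_δ_δ (i j : ℕ) : Commute (δ i) (δ j) :=
  LinearMap.ext (δ_δ i j)

/-- The action of the abelian algebra of "vector fields" `∑ cᵢ ∂ᵢ`. -/
def ρ : (ℕ →₀ F) →ₗ[F] Module.End F A :=
  Finsupp.lsum F fun i => LinearMap.toSpanSingleton F _ (δ i)

lemma ρ_single (i : ℕ) (c : F) : ρ (Finsupp.single i c) = c • δ i := by
  simp [ρ]

lemma commute_δ_ρ (i : ℕ) (d : ℕ →₀ F) : Commute (δ i) (ρ d) := by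
  induction d using Finsupp.induction_linear with
  | zero => simp only [map_zero]; exact Commute.zero_right _
  | add f g hf hg => rw [map_add]; exact hf.add_right hg
  | single j c =>
    rw [ρ_single]
    exact (commute_δ_δ i j).smul_right c

lemma ρ_comm (d e : ℕ →₀ F) : Commute (ρ d) (ρ e) := by
  induction d using Finsupp.induction_linear with
  | zero => simp only [map_zero]; exact Commute.zero_left _
  | add f g hf hg => rw [map_add]; exact hf.add_left hg
  | single i c => rw [ρ_single]; exact (commute_δ_ρ i e).smul_left c

lemma ρ_comm_apply (d e : ℕ →₀ F) (a : A) : ρ d (ρ e a) = ρ e (ρ d a) :=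
  DFunLike.congr_fun (ρ_comm d e).eq a

instance : CharP (Module.End F A) 3 := by
  have hinj : Function.Injective (algebraMap F (Module.End F A)) := by
    intro x y h
    have h2 := congrArg (fun φ : Module.End F A => φ (Finsupp.single ∅ (1 : F))) h
    simp only [Module.algebraMap_end_apply, Finsupp.smul_single, smul_eq_mul,
      mul_one] at h2
    exact Finsupp.single_injective ∅ h2
  exact charP_of_injective_algebraMap hinj 3

lemma ρ_cube (d : ℕ →₀ F) : (ρ d) ^ 3 = 0 := by
  haveI : Fact (Nat.Prime 3) := ⟨by norm_num⟩
  induction d using Finsupp.induction_linear with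
  | zero => simp [pow_succ]
  | add f g hf hg =>
    rw [map_add, add_pow_char_of_commute _ (ρ_comm f g), hf, hg, add_zero]
  | single i c =>
    rw [ρ_single, smul_pow]
    have : (δ i) ^ 3 = 0 := by
      ext a
      simp [pow_succ, Module.End.mul_apply, δ_sq]
    rw [this, smul_zero]

lemma ρ_cube_apply (d : ℕ →₀ F) (a : A) : ρ d (ρ d (ρ d a)) = 0 := by
  have := DFunLike.congr_fun (ρ_cube d) a
  simpa [pow_succ, Module.End.mul_apply] using this

instance lieRingL : LieRing L where
  bracket x y := (0, ρ x.1 y.2 - ρ y.1 x.2)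
  add_lie x y z := by
    show ((0 : ℕ →₀ F), ρ (x.1 + y.1) z.2 - ρ z.1 (x.2 + y.2))
        = ((0 : ℕ →₀ F), ρ x.1 z.2 - ρ z.1 x.2) + ((0 : ℕ →₀ F), ρ y.1 z.2 - ρ z.1 y.2)
    rw [Prod.mk_add_mk, add_zero]
    congr 1
    simp only [map_add, LinearMap.add_apply]
    abel
  lie_add x y z := by
    show ((0 : ℕ →₀ F), ρ x.1 (y.2 + z.2) - ρ (y.1 + z.1) x.2)
        = ((0 : ℕ →₀ F), ρ x.1 y.2 - ρ y.1 x.2) + ((0 : ℕ →₀ F), ρ x.1 z.2 - ρ z.1 x.2)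
    rw [Prod.mk_add_mk, add_zero]
    congr 1
    simp only [map_add, LinearMap.add_apply]
    abel
  lie_self x := by
    show ((0 : ℕ →₀ F), ρ x.1 x.2 - ρ x.1 x.2) = (0 : L)
    simp
  leibniz_lie x y z := by
    show ((0 : ℕ →₀ F), ρ x.1 (ρ y.1 z.2 - ρ z.1 y.2) - ρ 0 x.2)
        = ((0 : ℕ →₀ F), ρ 0 z.2 - ρ z.1 (ρ x.1 y.2 - ρ y.1 x.2))
        + ((0 : ℕ →₀ F), ρ y.1 (ρ x.1 z.2 - ρ z.1 x.2) - ρ 0 y.2)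
    rw [Prod.mk_add_mk, add_zero]
    congr 1
    simp only [map_zero, map_sub, LinearMap.zero_apply, zero_sub, sub_zero]
    rw [ρ_comm_apply x.1 y.1 z.2, ρ_comm_apply x.1 z.1 y.2, ρ_comm_apply z.1 y.1 x.2]
    abel

instance lieAlgebraL : LieAlgebra F L where
  lie_smul t x y := by
    show ((0 : ℕ →₀ F), ρ x.1 (t • y.2) - ρ (t • y.1) x.2)
        = t • ((0 : ℕ →₀ F), ρ x.1 y.2 - ρ y.1 x.2)
    rw [Prod.smul_mk, smul_zero]
    congr 1
    simp only [map_smul, LinearMap.smul_apply, smul_sub]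

lemma engel (x y : L) : ⁅⁅⁅⁅x, y⁆, y⁆, y⁆, y⁆ = 0 := by
  show ((0 : ℕ →₀ F),
      ρ 0 y.2 - ρ y.1 (ρ 0 y.2 - ρ y.1 (ρ 0 y.2 - ρ y.1 (ρ x.1 y.2 - ρ y.1 x.2))))
      = ((0 : ℕ →₀ F), (0 : A))
  congr 1
  simp only [map_zero, LinearMap.zero_apply, zero_sub, map_neg, neg_neg, neg_eq_zero]
  exact ρ_cube_apply _ _

lemma mem_lcs (c : ℕ) (S : Finset ℕ) :
    ((0, Finsupp.single S 1) : L) ∈ LieModule.lowerCentralSeries F L L c := by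
  induction c generalizing S with
  | zero => simp
  | succ c ih =>
    obtain ⟨i, hi⟩ := S.exists_notMem
    have key : ⁅((Finsupp.single i 1, 0) : L), ((0, Finsupp.single (insert i S) 1) : L)⁆
        = ((0, Finsupp.single S 1) : L) := by
      show ((0 : ℕ →₀ F),
          ρ (Finsupp.single i 1) (Finsupp.single (insert i S) 1) - ρ 0 0) = _
      have h1 : ρ (Finsupp.single i (1 : F)) (Finsupp.single (insert i S) (1 : F))
          = Finsupp.single S 1 := by
        rw [ρ_single]
        simp [δ_single, Finset.mem_insert, Finset.erase_insert hi]
      simp [h1]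
    rw [LieModule.lowerCentralSeries_succ]
    exact key ▸ LieSubmodule.lie_mem_lie (LieSubmodule.mem_top _) (ih _)

end

end EngelExample

/-- There is a non-nilpotent Lie algebra `L` over `𝔽₃` satisfying the 4-Engel identity
`[x,y,y,y,y] = 0`. -/
theorem exists_nonNilpotent_fourEngel_char_three :
    ∃ (L : Type) (_ : LieRing L) (_ : LieAlgebra (ZMod 3) L),
      (∀ x y : L, ⁅⁅⁅⁅x, y⁆, y⁆, y⁆, y⁆ = 0) ∧
      ¬ ∃ c : ℕ, LieModule.lowerCentralSeries (ZMod 3) L L c = ⊥ := by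
  refine ⟨EngelExample.L, EngelExample.lieRingL, EngelExample.lieAlgebraL,
    EngelExample.engel, ?_⟩
  rintro ⟨c, hc⟩
  have h := EngelExample.mem_lcs c ∅
  rw [hc, LieSubmodule.mem_bot] at h
  have h2 := congrArg Prod.snd h
  simp only [Prod.snd_zero] at h2
  exact one_ne_zero (Finsupp.single_eq_zero.mp h2)
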